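/- Let r > 0 and let κ : ℝ → ℝ satisfy the regularity condition, with κ not identically zero. Then for every Q ∈ ℝ[X,Y]: Q(K(s,t), H(s,t)) = 0 for all s, t ∈ ℝ if and only if the polynomial r²·X − 2r·Y + 1 divides Q. -/

import Mathlib

open MvPolynomial

private lemma evalcomp (f : Fin 2 → Polynomial ℝ) (Q : MvPolynomial (Fin 2) ℝ) (x : ℝ) :
    Polynomial.eval x (aeval f Q) = eval (fun i => Polynomial.eval x (f i)) Q := by
  induction Q using MvPolynomial.induction_on with
  | C a => simp [Polynomial.aeval_C]
  | add p q hp hq => simp [hp, hq]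
  | mul_X p n hp => simp [hp]

private lemma aevalcomp (f : Fin 2 → Polynomial ℝ) (Q : MvPolynomial (Fin 2) ℝ) :
    Polynomial.aeval (X 0 : MvPolynomial (Fin 2) ℝ) (aeval f Q) =
      aeval (fun i => Polynomial.aeval (X 0 : MvPolynomial (Fin 2) ℝ) (f i)) Q := by
  induction Q using MvPolynomial.induction_on with
  | C a => simp
  | add p q hp hq => simp [hp, hq]
  | mul_X p n hp => simp [hp]

private lemma keymem (r : ℝ) (hr : r ≠ 0) (Q : MvPolynomial (Fin 2) ℝ) :
    Q - aeval (R := ℝ) ![(X 0 : MvPolynomial (Fin 2) ℝ), C (r/2) * X 0 + C (1/(2*r))] Q ∈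
      Ideal.span {(C (r ^ 2) * X 0 - C (2 * r) * X 1 + 1 : MvPolynomial (Fin 2) ℝ)} := by
  induction Q using MvPolynomial.induction_on with
  | C a => simp
  | add p q hp hq =>
      have := Ideal.add_mem _ hp hq
      convert this using 1
      simp only [map_add]
      ring
  | mul_X p n hp =>
      have hX : (X n : MvPolynomial (Fin 2) ℝ) - aeval (R := ℝ) ![(X 0 : MvPolynomial (Fin 2) ℝ), C (r/2) * X 0 + C (1/(2*r))] (X n) ∈
          Ideal.span {(C (r ^ 2) * X 0 - C (2 * r) * X 1 + 1 : MvPolynomial (Fin 2) ℝ)} := by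
        fin_cases n
        · simp
        · apply Ideal.mem_span_singleton.mpr
          refine ⟨C (-(2*r)⁻¹), ?_⟩
          simp only [aeval_X]
          show (X 1 : MvPolynomial (Fin 2) ℝ) - (C (r/2) * X 0 + C (1/(2*r)))
              = (C (r ^ 2) * X 0 - C (2 * r) * X 1 + 1) * C (-(2*r)⁻¹)
          have h1 : (C (2*r) : MvPolynomial (Fin 2) ℝ) * C (-(2*r)⁻¹) = -1 := by
            rw [← C_mul, show (2*r) * -(2*r)⁻¹ = -1 by field_simp]
            simp
          have h2 : (C (r^2) : MvPolynomial (Fin 2) ℝ) * C (-(2*r)⁻¹) = - C (r/2) := by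
            rw [← C_mul, show r^2 * -(2*r)⁻¹ = -(r/2) by field_simp]
            simp
          have h3 : (C (-(2*r)⁻¹) : MvPolynomial (Fin 2) ℝ) = - C (1/(2*r)) := by
            rw [show (-(2*r)⁻¹ : ℝ) = -(1/(2*r)) by rw [one_div]]
            simp
          linear_combination (X 1 : MvPolynomial (Fin 2) ℝ) * h1 - (X 0 : MvPolynomial (Fin 2) ℝ) * h2 - h3
      have hmul := Ideal.mul_mem_right (aeval (R := ℝ) ![(X 0 : MvPolynomial (Fin 2) ℝ), C (r/2) * X 0 + C (1/(2*r))] p) _ hX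
      have hmul2 := Ideal.mul_mem_right (X n : MvPolynomial (Fin 2) ℝ) _ hp
      have := Ideal.add_mem _ hmul2 hmul
      convert this using 1
      simp only [map_mul]
      ring

theorem stmt_8 (r : ℝ) (hr : 0 < r) (κ : ℝ → ℝ)
    (hreg : ∀ s t : ℝ, 1 - r * κ s * Real.cos t ≠ 0)
    (hκ : ¬ ∀ s, κ s = 0) (Q : MvPolynomial (Fin 2) ℝ) :
    (∀ s t : ℝ,
        eval ![κ s * Real.cos t / (r * (r * κ s * Real.cos t - 1)),
          (2 * r * κ s * Real.cos t - 1) / (2 * r * (r * κ s * Real.cos t - 1))] Q = 0) ↔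
      (C (r ^ 2) * X 0 - C (2 * r) * X 1 + 1) ∣ Q := by
  have hr0 : r ≠ 0 := ne_of_gt hr
  have hd : ∀ s t : ℝ, r * κ s * Real.cos t - 1 ≠ 0 := by
    intro s t h
    exact hreg s t (by linarith [sub_eq_zero.mp h])
  constructor
  · intro h
    push_neg at hκ
    obtain ⟨s0, hs0⟩ := hκ
    set f : Fin 2 → Polynomial ℝ :=
      ![Polynomial.X, Polynomial.C (r/2) * Polynomial.X + Polynomial.C (1/(2*r))] with hf
    set q : Polynomial ℝ := aeval f Q with hq
    set g : ℝ → ℝ := fun t => κ s0 * Real.cos t / (r * (r * κ s0 * Real.cos t - 1)) with hg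
    have hroot : ∀ t : ℝ, q.IsRoot (g t) := by
      intro t
      have hd0 : r * κ s0 * Real.cos t - 1 ≠ 0 := hd s0 t
      have hfun : (fun i => Polynomial.eval (g t) (f i)) =
          ![κ s0 * Real.cos t / (r * (r * κ s0 * Real.cos t - 1)),
            (2 * r * κ s0 * Real.cos t - 1) / (2 * r * (r * κ s0 * Real.cos t - 1))] := by
        funext i
        fin_cases i
        · simp [hf, hg]
        · simp only [hf, hg, Matrix.cons_val_one, Matrix.head_cons, Polynomial.eval_add,
            Polynomial.eval_mul, Polynomial.eval_C, Polynomial.eval_X, Matrix.cons_val_zero, Fin.mk_one]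
          field_simp
          ring
      show Polynomial.IsRoot (aeval f Q) _
      rw [Polynomial.IsRoot, evalcomp, hfun]
      exact h s0 t
    have hqz : q = 0 := by
      apply Polynomial.eq_zero_of_infinite_isRoot
      have hsub : g '' Set.Icc 0 Real.pi ⊆ {x | q.IsRoot x} := by
        rintro x ⟨t, _, rfl⟩
        exact hroot t
      refine Set.Infinite.mono hsub ?_
      apply Set.Infinite.image
      · intro t1 ht1 t2 ht2 heq
        have hd1 : r * κ s0 * Real.cos t1 - 1 ≠ 0 := hd s0 t1
        have hd2 : r * κ s0 * Real.cos t2 - 1 ≠ 0 := hd s0 t2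
        have hcos : Real.cos t1 = Real.cos t2 := by
          have : κ s0 * Real.cos t1 * (r * (r * κ s0 * Real.cos t2 - 1))
              = κ s0 * Real.cos t2 * (r * (r * κ s0 * Real.cos t1 - 1)) := by
            have h1 : r * (r * κ s0 * Real.cos t1 - 1) ≠ 0 := mul_ne_zero hr0 hd1
            have h2 : r * (r * κ s0 * Real.cos t2 - 1) ≠ 0 := mul_ne_zero hr0 hd2
            simp only [hg] at heq
            rw [div_eq_div_iff h1 h2] at heq
            linarith [heq]
          have : κ s0 * Real.cos t1 = κ s0 * Real.cos t2 := by
            nlinarith [this]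
          exact mul_left_cancel₀ hs0 this
        exact Real.injOn_cos ht1 ht2 hcos
      · exact Set.Icc_infinite Real.pi_pos
    have haev : aeval (R := ℝ) ![(X 0 : MvPolynomial (Fin 2) ℝ), C (r/2) * X 0 + C (1/(2*r))] Q = 0 := by
      have := aevalcomp f Q
      rw [← hq, hqz, map_zero] at this
      have hfun : (fun i => Polynomial.aeval (X 0 : MvPolynomial (Fin 2) ℝ) (f i)) =
          ![(X 0 : MvPolynomial (Fin 2) ℝ), C (r/2) * X 0 + C (1/(2*r))] := by
        funext i
        fin_cases i
        · simp [hf]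
        · simp [hf, algebraMap_eq]
      rw [hfun] at this
      exact this.symm
    have hmem := keymem r hr0 Q
    rw [haev, sub_zero] at hmem
    exact Ideal.mem_span_singleton.mp hmem
  · rintro ⟨R, rfl⟩ s t
    rw [map_mul]
    have hd0 : r * κ s * Real.cos t - 1 ≠ 0 := hd s t
    have : eval ![κ s * Real.cos t / (r * (r * κ s * Real.cos t - 1)),
          (2 * r * κ s * Real.cos t - 1) / (2 * r * (r * κ s * Real.cos t - 1))]
        (C (r ^ 2) * X 0 - C (2 * r) * X 1 + 1) = 0 := by
      simp only [map_add, map_sub, map_mul, eval_C, eval_X, map_one,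
        Matrix.cons_val_zero, Matrix.cons_val_one, Matrix.head_cons]
      field_simp
      ring
    rw [this, zero_mul]
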